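/- (Proposition 4, non-singularity of the pilot-based BPSK FIM.) Assume P ≥ 2, D ≥ 1 and T_f ≠ 0. Then the matrix J_{bpsk,p} has trivial kernel (full column rank). Consequently, for every Hermitian positive definite complex matrix M indexed by (Fin L) ⊕ (Fin L) ⊕ (Fin (P+D) × Fin L) ⊕ (Fin L) ⊕ (Fin L), the matrix J_{bpsk,p}ᵀ · M · J_{bpsk,p} (equal to J_{bpsk,p}ᴴ · M · J_{bpsk,p} since J_{bpsk,p} has real entries) is Hermitian positive definite, and in particular invertible: pilots decouple the BPSK data phase from the Doppler parameters. -/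

import Mathlib

open Matrix
open scoped ComplexOrder

noncomputable section

/-- The matrix `H`: first column all ones, agreeing with the identity elsewhere. -/
def Hmat (L : ℕ) : Matrix (Fin L) (Fin L) ℂ :=
  Matrix.of fun i j => if j.val = 0 ∨ i = j then 1 else 0

/-- The all-ones column vector `E` of length `L`. -/
def Emat (L : ℕ) : Matrix (Fin L) (Fin 1) ℂ :=
  Matrix.of fun _ _ => 1

/-- Index of the observation vector in the pilot-based systems:
pilot delays, data delays, phases, pilot amplitudes, data amplitudes. -/
abbrev PIdx (L P D : ℕ) :=
  Fin L ⊕ Fin L ⊕ (Fin (P + D) × Fin L) ⊕ Fin L ⊕ Fin L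

/-- The Jacobian matrix of the pilot-based BPSK ISAC case: row blocks `[H, 0, 0, 0]` for both
delay groups, `[0, (2πκT_f)·H, (2πκT_f)·E, 0]` for the phases with `κ ≥ P` and
`[0, (2πκT_f)·H, 0, 0]` for `κ < P`, `[0, 0, 0, I_L]` for the amplitude groups. -/
def JbpskP (L P D : ℕ) (Tf : ℝ) :
    Matrix (PIdx L P D) (Fin L ⊕ Fin L ⊕ Fin 1 ⊕ Fin L) ℂ :=
  Matrix.of fun i j =>
    match i, j with
    | Sum.inl a, Sum.inl b => Hmat L a b
    | Sum.inr (Sum.inl a), Sum.inl b => Hmat L a b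
    | Sum.inr (Sum.inr (Sum.inl (κ, a))), Sum.inr (Sum.inl b) =>
        ((2 * Real.pi * (κ.1 : ℝ) * Tf : ℝ) : ℂ) * Hmat L a b
    | Sum.inr (Sum.inr (Sum.inl (κ, a))), Sum.inr (Sum.inr (Sum.inl b)) =>
        if P ≤ κ.1 then ((2 * Real.pi * (κ.1 : ℝ) * Tf : ℝ) : ℂ) * Emat L a b else 0
    | Sum.inr (Sum.inr (Sum.inr (Sum.inl a))), Sum.inr (Sum.inr (Sum.inr b)) =>
        (1 : Matrix (Fin L) (Fin L) ℂ) a b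
    | Sum.inr (Sum.inr (Sum.inr (Sum.inr a))), Sum.inr (Sum.inr (Sum.inr b)) =>
        (1 : Matrix (Fin L) (Fin L) ℂ) a b
    | _, _ => 0

lemma Hker (L : ℕ) (hL : 1 ≤ L) (w : Fin L → ℂ)
    (h : ∀ a : Fin L, ∑ b, Hmat L a b * w b = 0) : w = 0 := by
  obtain ⟨i0, hi0v⟩ : ∃ i0 : Fin L, i0.val = 0 := ⟨⟨0, hL⟩, rfl⟩
  have hsplit : ∀ a b : Fin L, Hmat L a b * w b =
      (if b = i0 then w b else 0) + (if b = a then (if a = i0 then 0 else w b) else 0) := by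
    intro a b
    by_cases h1 : b = i0
    · have hb : b.val = 0 := by rw [h1]; exact hi0v
      by_cases h2 : a = i0
      · simp [Hmat, hb, h1, h2]
      · simp [Hmat, hb, hi0v, h1, h2, Ne.symm h2]
    · have hb : ¬ b.val = 0 := fun hh => h1 (Fin.ext (by rw [hh, hi0v]))
      by_cases h2 : b = a
      · subst h2
        simp [Hmat, hb, h1]
      · simp [Hmat, hb, h1, h2, Ne.symm h2]
  have key : ∀ a : Fin L, w i0 + (if a = i0 then 0 else w a) = 0 := by
    intro a
    have := h a
    rw [Finset.sum_congr rfl (fun b _ => hsplit a b)] at this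
    rw [Finset.sum_add_distrib, Finset.sum_ite_eq' Finset.univ i0 w,
      Finset.sum_ite_eq' Finset.univ a] at this
    simpa using this
  have h0 : w i0 = 0 := by simpa using key i0
  funext a
  by_cases ha : a = i0
  · rw [ha]; exact h0
  · have := key a
    rw [h0, if_neg ha, zero_add] at this
    exact this

/-- Proposition 4, non-singularity of the pilot-based BPSK FIM: `J_{bpsk,p}` has trivial
kernel, and for every Hermitian positive definite `M` the matrix `J_{bpsk,p}ᵀ · M · J_{bpsk,p}`
is Hermitian positive definite, in particular invertible. -/
theorem bpsk_pilot_fim_nonsingular (L P D : ℕ) (hL : 1 ≤ L) (hP : 2 ≤ P) (hD : 1 ≤ D)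
    (Tf : ℝ) (hTf : Tf ≠ 0) :
    (∀ v : (Fin L ⊕ Fin L ⊕ Fin 1 ⊕ Fin L) → ℂ,
        (JbpskP L P D Tf).mulVec v = 0 → v = 0) ∧
      ∀ M : Matrix (PIdx L P D) (PIdx L P D) ℂ, M.PosDef →
        ((JbpskP L P D Tf)ᵀ * M * JbpskP L P D Tf).PosDef ∧
          IsUnit ((JbpskP L P D Tf)ᵀ * M * JbpskP L P D Tf) := by
  have hcne : ∀ k : ℕ, k ≠ 0 → ((2 * Real.pi * (k : ℝ) * Tf : ℝ) : ℂ) ≠ 0 := by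
    intro k hk
    rw [Complex.ofReal_ne_zero]
    exact mul_ne_zero (mul_ne_zero (mul_ne_zero two_ne_zero Real.pi_ne_zero)
      (Nat.cast_ne_zero.mpr hk)) hTf
  have hker : ∀ v : (Fin L ⊕ Fin L ⊕ Fin 1 ⊕ Fin L) → ℂ,
      (JbpskP L P D Tf).mulVec v = 0 → v = 0 := by
    intro v hv
    -- v1 = 0
    have e1 : ∀ a : Fin L, ∑ b, Hmat L a b * v (Sum.inl b) = 0 := by
      intro a
      have := congrFun hv (Sum.inl a)
      simpa [mulVec, dotProduct, JbpskP, Fintype.sum_sum_type] using this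
    have hv1 : (fun b => v (Sum.inl b)) = 0 := Hker L hL _ e1
    -- v2 = 0 (use κ = 1 < P)
    have hκ1 : (1 : ℕ) < P + D := by omega
    have e2 : ∀ a : Fin L, ∑ b, Hmat L a b * v (Sum.inr (Sum.inl b)) = 0 := by
      intro a
      have h := congrFun hv (Sum.inr (Sum.inr (Sum.inl (⟨1, hκ1⟩, a))))
      have hP1 : ¬ P ≤ 1 := by omega
      rw [show (0 : (PIdx L P D) → ℂ) (Sum.inr (Sum.inr (Sum.inl (⟨1, hκ1⟩, a)))) = 0 from rfl]
        at h
      simp only [mulVec, dotProduct, JbpskP, Matrix.of_apply, Fintype.sum_sum_type,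
        hP1, if_false, zero_mul, Finset.sum_const_zero, add_zero, zero_add] at h
      have h' : ((2 * Real.pi * ((1:ℕ) : ℝ) * Tf : ℝ) : ℂ) *
          ∑ b, Hmat L a b * v (Sum.inr (Sum.inl b)) = 0 := by
        rw [Finset.mul_sum]
        rw [← h]
        exact Finset.sum_congr rfl fun b _ => by push_cast; ring
      rcases mul_eq_zero.mp h' with hc | hs
      · exact absurd hc (hcne 1 one_ne_zero)
      · exact hs
    have hv2 : (fun b => v (Sum.inr (Sum.inl b))) = 0 := Hker L hL _ e2
    -- v3 = 0 (use κ = P)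
    have hκP : P < P + D := by omega
    have hv3 : ∀ b : Fin 1, v (Sum.inr (Sum.inr (Sum.inl b))) = 0 := by
      intro b
      have h := congrFun hv (Sum.inr (Sum.inr (Sum.inl (⟨P, hκP⟩, ⟨0, hL⟩))))
      rw [show (0 : (PIdx L P D) → ℂ) (Sum.inr (Sum.inr (Sum.inl (⟨P, hκP⟩, ⟨0, hL⟩)))) = 0
        from rfl] at h
      have hPP : P ≤ P := le_refl P
      simp only [mulVec, dotProduct, JbpskP, Matrix.of_apply, Fintype.sum_sum_type,
        hPP, if_true, zero_mul, Finset.sum_const_zero, add_zero, zero_add] at h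
      have hz : ∀ b' : Fin L,
          ((2 * Real.pi * (P : ℝ) * Tf : ℝ) : ℂ) * Hmat L ⟨0, hL⟩ b' *
            v (Sum.inr (Sum.inl b')) = 0 := by
        intro b'
        have : v (Sum.inr (Sum.inl b')) = 0 := congrFun hv2 b'
        rw [this, mul_zero]
      rw [Finset.sum_congr rfl (fun b' _ => hz b'), Finset.sum_const_zero, zero_add] at h
      simp only [Emat, Matrix.of_apply, mul_one, Fin.sum_univ_one] at h
      have := (mul_eq_zero.mp h).resolve_left (hcne P (by omega))
      rw [Subsingleton.elim b 0]
      exact this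
    -- v4 = 0
    have hv4 : ∀ a : Fin L, v (Sum.inr (Sum.inr (Sum.inr a))) = 0 := by
      intro a
      have h := congrFun hv (Sum.inr (Sum.inr (Sum.inr (Sum.inl a))))
      rw [show (0 : (PIdx L P D) → ℂ) (Sum.inr (Sum.inr (Sum.inr (Sum.inl a)))) = 0 from rfl]
        at h
      simpa [mulVec, dotProduct, JbpskP, Fintype.sum_sum_type, Matrix.one_apply] using h
    funext j
    rcases j with b | b | b | b
    · exact congrFun hv1 b
    · exact congrFun hv2 b
    · exact hv3 b
    · exact hv4 b
  refine ⟨hker, fun M hM => ?_⟩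
  have hstar : ∀ i j, star (JbpskP L P D Tf i j) = JbpskP L P D Tf i j := by
    intro i j
    rcases i with a | a | ⟨κ, a⟩ | a | a <;> rcases j with b | b | b | b <;>
      simp [JbpskP, Hmat, Emat, Matrix.one_apply, apply_ite (star : ℂ → ℂ)]
  have hJt : (JbpskP L P D Tf)ᵀ = (JbpskP L P D Tf)ᴴ := by
    ext i j
    simp [conjTranspose_apply, transpose_apply, hstar]
  have hpd : ((JbpskP L P D Tf)ᵀ * M * JbpskP L P D Tf).PosDef := by
    rw [hJt]
    refine Matrix.PosDef.of_dotProduct_mulVec_pos (Matrix.isHermitian_conjTranspose_mul_mul _ hM.1) fun x hx => ?_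
    have hJx : JbpskP L P D Tf *ᵥ x ≠ 0 := fun h0 => hx (hker x h0)
    simpa only [star_mulVec, dotProduct_mulVec, vecMul_vecMul] using hM.dotProduct_mulVec_pos hJx
  exact ⟨hpd, hpd.isUnit⟩
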